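/- Under the regularity condition, for every integer j ≥ 0 the covariance c_j = Cov(X_0, X_j) satisfies c_j = lim_{n→∞} Σ_{l=0}^{n−j} E[(P_0 X_l)(P_0 X_{l+j})]. -/

import Mathlib

open MeasureTheory ProbabilityTheory Filter Real
open scoped Topology ENNReal NNReal

noncomputable section

namespace CovAux

variable {Ω : Type*} {m m0 : MeasurableSpace Ω} {P : Measure Ω}

/-- bridge: condexp of an L² function agrees a.e. with condexpL2. -/
lemma condexp_eq_condexpL2 [IsFiniteMeasure P] (hm : m ≤ m0) {f : Ω → ℝ} (hf : MemLp f 2 P) :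
    P[f|m] =ᵐ[P] (condExpL2 ℝ ℝ hm (hf.toLp f) : Lp ℝ 2 P) := by
  have hint : Integrable f P := hf.integrable one_le_two
  refine (ae_eq_condExp_of_forall_setIntegral_eq hm hint ?_ ?_ ?_).symm
  · intro s hs hμs
    exact integrableOn_condExpL2_of_measure_ne_top hm hμs.ne _
  · intro s hs hμs
    rw [integral_condExpL2_eq hm (hf.toLp f) hs hμs.ne]
    exact setIntegral_congr_ae (hm s hs) ((hf.coeFn_toLp).mono fun x hx _ => hx)
  · exact aestronglyMeasurable_condExpL2 hm _

lemma memℒp_two_condexp [IsFiniteMeasure P] (hm : m ≤ m0) {f : Ω → ℝ} (hf : MemLp f 2 P) :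
    MemLp (P[f|m]) 2 P :=
  (Lp.memLp _).ae_eq (condexp_eq_condexpL2 hm hf).symm

lemma integrable_mul2 {f g : Ω → ℝ} (hf : MemLp f 2 P) (hg : MemLp g 2 P) :
    Integrable (fun ω => f ω * g ω) P := by
  have h : MemLp (f • g) 1 P := hg.smul hf
  simpa [smul_eq_mul, Pi.mul_def] using memLp_one_iff_integrable.mp h



lemma integral_comp_mp {Ω : Type*} [M : MeasurableSpace Ω] {P : Measure Ω} {T : Ω → Ω}
    (hT : MeasurePreserving T P P) {f : Ω → ℝ} (hf : AEStronglyMeasurable f P) :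
    ∫ ω, f (T ω) ∂P = ∫ ω, f ω ∂P := by
  have hf' : AEStronglyMeasurable f (Measure.map T P) := by rwa [hT.map_eq]
  rw [← integral_map hT.aemeasurable hf', hT.map_eq]

lemma setIntegral_comp_mp {Ω : Type*} [M : MeasurableSpace Ω] {P : Measure Ω} {T : Ω → Ω}
    (hT : MeasurePreserving T P P) {f : Ω → ℝ} (hf : AEStronglyMeasurable f P)
    {B : Set Ω} (hB : MeasurableSet B) :
    ∫ x in T ⁻¹' B, f (T x) ∂P = ∫ x in B, f x ∂P := by
  have hf' : AEStronglyMeasurable f (Measure.map T P) := by rwa [hT.map_eq]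
  rw [← setIntegral_map hB hf' hT.aemeasurable, hT.map_eq]

lemma integrable_comp_mp {Ω : Type*} [M : MeasurableSpace Ω] {P : Measure Ω} {T : Ω → Ω}
    (hT : MeasurePreserving T P P) {f : Ω → ℝ} (hf : Integrable f P) :
    Integrable (f ∘ T) P :=
  memLp_one_iff_integrable.mp
    ((memLp_one_iff_integrable.mpr hf).comp_measurePreserving hT)

lemma condexp_comp_mp {Ω : Type*} {m : MeasurableSpace Ω} [M : MeasurableSpace Ω]
    {P : Measure Ω} [IsProbabilityMeasure P]
    {T : Ω → Ω} (hT : MeasurePreserving T P P)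
    (hm : m ≤ M) {f : Ω → ℝ} (hf : Integrable f P) :
    P[(f ∘ T)|MeasurableSpace.comap T m] =ᵐ[P] (P[f|m]) ∘ T := by
  have hc : MeasurableSpace.comap T m ≤ M := by
    rintro s ⟨B, hB, rfl⟩
    exact hT.measurable (hm B hB)
  have hTm : @Measurable Ω Ω (MeasurableSpace.comap T m) m T := fun s hs => ⟨s, hs, rfl⟩
  have hg_meas : StronglyMeasurable[MeasurableSpace.comap T m] ((P[f|m]) ∘ T) :=
    stronglyMeasurable_condExp.comp_measurable hTm
  have hg_int : Integrable ((P[f|m]) ∘ T) P := integrable_comp_mp hT integrable_condExp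
  refine (ae_eq_condExp_of_forall_setIntegral_eq hc (integrable_comp_mp hT hf) ?_ ?_ ?_).symm
  · exact fun s _ _ => hg_int.integrableOn
  · rintro s ⟨B, hB, rfl⟩ _
    have hBM : MeasurableSet B := hm B hB
    have h1 : ∫ x in T ⁻¹' B, ((P[f|m]) ∘ T) x ∂P = ∫ x in B, (P[f|m]) x ∂P :=
      setIntegral_comp_mp hT (stronglyMeasurable_condExp.mono hm).aestronglyMeasurable hBM
    have h2 : ∫ x in T ⁻¹' B, (f ∘ T) x ∂P = ∫ x in B, f x ∂P :=
      setIntegral_comp_mp hT hf.aestronglyMeasurable hBM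
    rw [h1, h2, setIntegral_condExp hm hf hB]
  · exact ⟨(P[f|m]) ∘ T, hg_meas, Filter.EventuallyEq.rfl⟩



lemma tendsto_norm_condexpL2_zero
    {Ω : Type*} {m' : MeasurableSpace Ω} [M : MeasurableSpace Ω] {P : Measure Ω}
    [IsProbabilityMeasure P]
    (G : ℕ → MeasurableSpace Ω) (hG_le : ∀ n, G n ≤ M) (hG_anti : Antitone G)
    {f : Ω → ℝ} (hf : MemLp f 2 P)
    (hm' : m' ≤ M) (hm'_le : ∀ n, m' ≤ G n)
    (hm'_meas : ∀ s : Set Ω, (∀ n, MeasurableSet[G n] s) → MeasurableSet[m'] s)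
    (hreg : P[f|m'] =ᵐ[P] 0) :
    Tendsto (fun n => ‖(condExpL2 ℝ ℝ (hG_le n) (hf.toLp f) : Lp ℝ 2 P)‖) atTop (𝓝 0) := by
  set x0 : Lp ℝ 2 P := hf.toLp f with hx0
  set y : ℕ → Lp ℝ 2 P := fun n => (condExpL2 ℝ ℝ (hG_le n) x0 : Lp ℝ 2 P) with hy
  have hAE : ∀ n, AEStronglyMeasurable[G n] (⇑(y n)) P := fun n =>
    aestronglyMeasurable_condExpL2 (hG_le n) x0
  -- inner products
  have hinner : ∀ m n : ℕ, m ≤ n → inner ℝ (y m) (y n) = ‖y n‖ ^ 2 := by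
    intro m n hmn
    have h1 : inner ℝ (y m) (y n) = inner ℝ x0 (y n) :=
      inner_condExpL2_eq_inner_fun (hG_le m) x0 (y n) ((hAE n).mono (hG_anti hmn))
    have h2 : inner ℝ (y n) (y n) = inner ℝ x0 (y n) :=
      inner_condExpL2_eq_inner_fun (hG_le n) x0 (y n) (hAE n)
    rw [h1, ← h2, real_inner_self_eq_norm_sq]
  have hdist : ∀ m n : ℕ, m ≤ n → ‖y m - y n‖ ^ 2 = ‖y m‖ ^ 2 - ‖y n‖ ^ 2 := by
    intro m n hmn
    rw [norm_sub_sq_real, hinner m n hmn]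
    ring
  set a : ℕ → ℝ := fun n => ‖y n‖ ^ 2 with ha
  have ha_anti : Antitone a := by
    intro m n hmn
    show ‖y n‖ ^ 2 ≤ ‖y m‖ ^ 2
    nlinarith [hdist m n hmn, sq_nonneg ‖y m - y n‖]
  have ha_bdd : BddBelow (Set.range a) := ⟨0, by rintro _ ⟨n, rfl⟩; positivity⟩
  have ha_tend : Tendsto a atTop (𝓝 (⨅ n, a n)) := tendsto_atTop_ciInf ha_anti ha_bdd
  set L : ℝ := ⨅ n, a n with hL
  have hL_le : ∀ n, L ≤ a n := fun n => ciInf_le ha_bdd n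
  -- Cauchy sequence
  have hb_tend : Tendsto (fun N => Real.sqrt (a N - L)) atTop (𝓝 0) := by
    have h1 : Tendsto (fun N => a N - L) atTop (𝓝 0) := by
      simpa using ha_tend.sub (tendsto_const_nhds (x := L))
    have := (Real.continuous_sqrt.tendsto 0).comp h1
    simpa [Function.comp_def] using this
  have hcauchy : CauchySeq y := by
    refine cauchySeq_of_le_tendsto_0 (fun N => Real.sqrt (a N - L)) ?_ hb_tend
    intro n m N hn hm
    have key : ∀ p q : ℕ, N ≤ p → p ≤ q → dist (y p) (y q) ≤ Real.sqrt (a N - L) := by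
      intro p q hNp hpq
      have h1 : dist (y p) (y q) ^ 2 = a p - a q := by
        rw [dist_eq_norm]; exact hdist p q hpq
      have h2 : a p - a q ≤ a N - L := by
        have := ha_anti hNp
        have := hL_le q
        linarith
      have h3 : dist (y p) (y q) = Real.sqrt (dist (y p) (y q) ^ 2) :=
        (Real.sqrt_sq dist_nonneg).symm
      rw [h3, h1]
      exact Real.sqrt_le_sqrt h2
    rcases le_total n m with h | h
    · exact key n m hn h
    · rw [dist_comm]; exact key m n hm h
  obtain ⟨Y, hY⟩ := cauchySeq_tendsto_of_complete hcauchy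
  -- identify the limit
  have hYint : Integrable (⇑Y) P :=
    ((Lp.memLp Y).mono_exponent (by norm_num : (1:ℝ≥0∞) ≤ 2)).integrable le_rfl
  have setint : ∀ s : Set Ω, MeasurableSet[m'] s → P s < ⊤ →
      ∫ x in s, Y x ∂P = ∫ x in s, f x ∂P := by
    intro s hs _
    have hsM : MeasurableSet[M] s := hm' s hs
    set ind : Lp ℝ 2 P := indicatorConstLp 2 hsM (measure_ne_top P s) (1 : ℝ) with hind
    have hinner_eq : ∀ g : Lp ℝ 2 P, inner ℝ ind g = ∫ x in s, g x ∂P := fun g =>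
      L2.inner_indicatorConstLp_one hsM (measure_ne_top P s) g
    have hconst : ∀ n, ∫ x in s, (y n) x ∂P = ∫ x in s, f x ∂P := by
      intro n
      have h1 : ∫ x in s, (y n) x ∂P = ∫ x in s, x0 x ∂P :=
        integral_condExpL2_eq (hG_le n) x0 (hm'_le n s hs) (measure_ne_top P s)
      rw [h1]
      exact setIntegral_congr_ae hsM ((hf.coeFn_toLp).mono fun x hx _ => hx)
    have htend : Tendsto (fun n => inner ℝ ind (y n)) atTop (𝓝 (inner ℝ ind Y)) :=
      (tendsto_const_nhds (x := ind)).inner hY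
    have htend' : Tendsto (fun n => inner ℝ ind (y n)) atTop (𝓝 (∫ x in s, f x ∂P)) := by
      have : (fun n => inner ℝ ind (y n)) = fun _ => ∫ x in s, f x ∂P := by
        funext n; rw [hinner_eq, hconst]
      rw [this]; exact tendsto_const_nhds
    have := tendsto_nhds_unique htend htend'
    rw [← hinner_eq Y, this]
  -- a.e. measurability w.r.t. m'
  have hsn : Tendsto (fun n => eLpNorm (⇑(y n) - ⇑Y) 2 P) atTop (𝓝 0) := by
    have heq : ∀ n, eLpNorm (⇑(y n) - ⇑Y) 2 P = ENNReal.ofReal ‖y n - Y‖ := by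
      intro n
      rw [← eLpNorm_congr_ae (Lp.coeFn_sub (y n) Y), Lp.norm_def,
        ENNReal.ofReal_toReal (Lp.eLpNorm_ne_top _)]
    simp_rw [heq]
    have h0 : Tendsto (fun n => ‖y n - Y‖) atTop (𝓝 0) :=
      tendsto_iff_norm_sub_tendsto_zero.mp hY
    have := (ENNReal.continuous_ofReal.tendsto 0).comp h0
    simpa [Function.comp_def] using this
  have htm : TendstoInMeasure P (fun n => ⇑(y n)) atTop ⇑Y :=
    tendstoInMeasure_of_tendsto_eLpNorm (by norm_num : (2:ℝ≥0∞) ≠ 0)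
      (fun n => Lp.aestronglyMeasurable _) (Lp.aestronglyMeasurable _) hsn
  obtain ⟨φ, hφmono, hφae⟩ := htm.exists_seq_tendsto_ae
  set Gm : ℕ → Ω → ℝ := fun k => (hAE (φ k)).mk _ with hGm
  set g : Ω → ℝ := fun ω => limsup (fun k => Gm k ω) atTop with hg
  have hg_meas : ∀ m : ℕ, @Measurable Ω ℝ (G m) _ g := by
    intro m
    have hshift : g = fun ω => limsup (fun k => Gm (k + m) ω) atTop :=
      funext fun ω => (limsup_nat_add (fun k => Gm k ω) m).symm
    rw [hshift]
    refine Measurable.limsup fun k => ?_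
    have h1 : @Measurable Ω ℝ (G (φ (k + m))) _ (Gm (k + m)) :=
      ((hAE (φ (k + m))).stronglyMeasurable_mk).measurable
    exact h1.mono (hG_anti ((le_add_self : m ≤ k + m).trans hφmono.le_apply)) le_rfl
  have hg_m' : @Measurable Ω ℝ m' _ g := fun s hs => hm'_meas _ fun n => hg_meas n hs
  have hg_ae : ⇑Y =ᵐ[P] g := by
    have hae_eq : ∀ᵐ ω ∂P, ∀ k, (y (φ k)) ω = Gm k ω :=
      ae_all_iff.mpr fun k => (hAE (φ k)).ae_eq_mk
    filter_upwards [hφae, hae_eq] with ω h1 h2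
    have h3 : Tendsto (fun k => Gm k ω) atTop (𝓝 (Y ω)) := h1.congr h2
    exact (h3.limsup_eq).symm
  have hYm : AEStronglyMeasurable[m'] (⇑Y) P :=
    ⟨g, hg_m'.stronglyMeasurable, hg_ae⟩
  have hY_eq : ⇑Y =ᵐ[P] P[f|m'] :=
    ae_eq_condExp_of_forall_setIntegral_eq hm' (hf.integrable one_le_two)
      (fun s _ _ => hYint.integrableOn) setint hYm
  have hY0 : ⇑Y =ᵐ[P] 0 := hY_eq.trans hreg
  have hYnorm : ‖Y‖ = 0 := by
    rw [Lp.norm_def, eLpNorm_congr_ae hY0, eLpNorm_zero, ENNReal.toReal_zero]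
  have := hY.norm
  rwa [hYnorm] at this


/-- The projection `P_k f = E[f|F k] - E[f|F (k-1)]`. -/
def Dk {Ω : Type*} [MeasurableSpace Ω] (P : Measure Ω) (F : ℤ → MeasurableSpace Ω)
    (k : ℤ) (f : Ω → ℝ) : Ω → ℝ :=
  fun ω => (P[f|F k]) ω - (P[f|F (k-1)]) ω

end CovAux

/-- **Covariance identity in the proof of Lemma 4.2.**  Under regularity, for every `j ≥ 0`,
`c_j = Cov(X_0, X_j) = lim_n ∑_{l=0}^{n−j} E[(P_0 X_l)(P_0 X_{l+j})]`, where
`P_0 Y = E(Y|F_0) − E(Y|F_{−1})`. -/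
theorem covariance_eq_limit_proj_sums
    {Ω : Type*} [MeasurableSpace Ω] (P : Measure Ω) [IsProbabilityMeasure P]
    (T Tinv : Ω → Ω) (hT : Ergodic T P)
    (hTinv : Measurable Tinv)
    (hTlinv : Function.LeftInverse Tinv T) (hTrinv : Function.RightInverse Tinv T)
    (F : ℤ → MeasurableSpace Ω)
    (hF_le : ∀ j, F j ≤ ‹MeasurableSpace Ω›)
    (hF_mono : Monotone F)
    (hF_shift : ∀ j : ℤ, F (j + 1) = (F j).comap T)
    (X : ℤ → Ω → ℝ)
    (hX_shift : ∀ j : ℤ, X (j + 1) = X j ∘ T)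
    (hX0_meas : Measurable[F 0] (X 0))
    (hX0_L2 : MemLp (X 0) 2 P)
    (hX0_mean : ∫ ω, X 0 ω ∂P = 0)
    (hreg : P[X 0|⨅ j : ℤ, F j] =ᵐ[P] 0) :
    ∀ j : ℕ,
      Tendsto (fun n : ℕ => ∑ l ∈ Finset.range (n - j + 1),
          ∫ ω, ((P[X (l : ℤ)|F 0]) ω - (P[X (l : ℤ)|F (-1)]) ω) *
            ((P[X ((l : ℤ) + (j : ℤ))|F 0]) ω - (P[X ((l : ℤ) + (j : ℤ))|F (-1)]) ω) ∂P)
        atTop (𝓝 (∫ ω, X 0 ω * X (j : ℤ) ω ∂P)) := by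
  intro j
  classical
  open CovAux in
  have hTmp : MeasurePreserving T P P := hT.toMeasurePreserving
  have hTinvmp : MeasurePreserving Tinv P P := by
    refine ⟨hTinv, ?_⟩
    conv_lhs => rw [← hTmp.map_eq]
    rw [Measure.map_map hTinv hTmp.measurable,
      show Tinv ∘ T = id from funext hTlinv, Measure.map_id]
  -- ℒ² membership of all X m
  have hX2 : ∀ m : ℤ, MemLp (X m) 2 P := by
    intro m
    induction m using Int.induction_on with
    | zero => exact hX0_L2
    | succ i ih => rw [hX_shift]; exact ih.comp_measurePreserving hTmp
    | pred i ih =>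
      have h1 : X (-(i:ℤ)) = X (-(i:ℤ) - 1) ∘ T := by
        have := hX_shift (-(i:ℤ) - 1); rwa [sub_add_cancel] at this
      have h2 : X (-(i:ℤ) - 1) = X (-(i:ℤ)) ∘ Tinv := by
        funext ω
        rw [h1]
        simp [Function.comp, hTrinv ω]
      rw [h2]; exact ih.comp_measurePreserving hTinvmp
  have hXi : ∀ m : ℤ, Integrable (X m) P := fun m => (hX2 m).integrable one_le_two
  have hC2 : ∀ (k m : ℤ), MemLp (P[X m|F k]) 2 P := fun k m =>
    CovAux.memℒp_two_condexp (hF_le k) (hX2 m)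
  have hD2 : ∀ (k m : ℤ), MemLp (Dk P F k (X m)) 2 P := fun k m =>
    (hC2 k m).sub (hC2 (k-1) m)
  have hDsm : ∀ (k : ℤ) (f : Ω → ℝ), StronglyMeasurable[F k] (Dk P F k f) := fun k f =>
    stronglyMeasurable_condExp.sub
      (stronglyMeasurable_condExp.mono (hF_mono (by omega : k - 1 ≤ k)))
  -- pull-out property
  have key1 : ∀ (k : ℤ) (h g : Ω → ℝ), StronglyMeasurable[F k] h → MemLp h 2 P →
      MemLp g 2 P →
      ∫ ω, h ω * g ω ∂P = ∫ ω, h ω * (P[g|F k]) ω ∂P := by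
    intro k h g hsm hh2 hg2
    have hint1 : Integrable (h * g) P := CovAux.integrable_mul2 hh2 hg2
    have e1 : ∫ ω, h ω * g ω ∂P = ∫ ω, (P[h * g|F k]) ω ∂P :=
      (integral_condExp (hF_le k)).symm
    have e2 : P[h * g|F k] =ᵐ[P] h * P[g|F k] :=
      condExp_mul_of_stronglyMeasurable_left hsm hint1 (hg2.integrable one_le_two)
    rw [e1, integral_congr_ae e2]
    rfl
  -- orthogonality of the projections
  have orth : ∀ (k a b : ℤ),
      ∫ ω, Dk P F k (X a) ω * Dk P F k (X b) ω ∂P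
        = ∫ ω, Dk P F k (X a) ω * X b ω ∂P := by
    intro k a b
    have e1 : ∫ ω, Dk P F k (X a) ω * X b ω ∂P
        = ∫ ω, Dk P F k (X a) ω * (P[X b|F k]) ω ∂P :=
      key1 k _ _ (hDsm k _) (hD2 k a) (hX2 b)
    have hz : P[Dk P F k (X a)|F (k-1)] =ᵐ[P] 0 := by
      have hsub : P[Dk P F k (X a)|F (k-1)]
          =ᵐ[P] P[P[X a|F k]|F (k-1)] - P[P[X a|F (k-1)]|F (k-1)] :=
        condExp_sub integrable_condExp integrable_condExp _
      have h1 : P[P[X a|F k]|F (k-1)] =ᵐ[P] P[X a|F (k-1)] :=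
        condExp_condExp_of_le (hF_mono (by omega : k - 1 ≤ k)) (hF_le k)
      have h2 : P[P[X a|F (k-1)]|F (k-1)] = P[X a|F (k-1)] :=
        condExp_of_stronglyMeasurable (hF_le (k-1)) stronglyMeasurable_condExp
          integrable_condExp
      filter_upwards [hsub, h1] with ω w1 w2
      simp only [Pi.sub_apply, Pi.zero_apply] at *
      rw [w1, w2, h2, sub_self]
    have e2 : ∫ ω, Dk P F k (X a) ω * (P[X b|F (k-1)]) ω ∂P = 0 := by
      have c1 : ∫ ω, Dk P F k (X a) ω * (P[X b|F (k-1)]) ω ∂P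
          = ∫ ω, (P[X b|F (k-1)]) ω * Dk P F k (X a) ω ∂P :=
        integral_congr_ae (Filter.Eventually.of_forall fun ω => mul_comm _ _)
      have c2 : ∫ ω, (P[X b|F (k-1)]) ω * Dk P F k (X a) ω ∂P
          = ∫ ω, (P[X b|F (k-1)]) ω * (P[Dk P F k (X a)|F (k-1)]) ω ∂P :=
        key1 (k-1) _ _ stronglyMeasurable_condExp (hC2 (k-1) b) (hD2 k a)
      have c3 : ∫ ω, (P[X b|F (k-1)]) ω * (P[Dk P F k (X a)|F (k-1)]) ω ∂P = 0 := by
        have : (fun ω => (P[X b|F (k-1)]) ω * (P[Dk P F k (X a)|F (k-1)]) ω)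
            =ᵐ[P] fun _ => (0:ℝ) := by
          filter_upwards [hz] with ω w
          simp only [Pi.zero_apply] at w
          rw [w, mul_zero]
        rw [integral_congr_ae this, integral_const]
        simp
      rw [c1, c2, c3]
    have expand : ∫ ω, Dk P F k (X a) ω * Dk P F k (X b) ω ∂P
        = (∫ ω, Dk P F k (X a) ω * (P[X b|F k]) ω ∂P)
          - ∫ ω, Dk P F k (X a) ω * (P[X b|F (k-1)]) ω ∂P := by
      rw [← integral_sub (CovAux.integrable_mul2 (hD2 k a) (hC2 k b))
        (CovAux.integrable_mul2 (hD2 k a) (hC2 (k-1) b))]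
      refine integral_congr_ae (Filter.Eventually.of_forall fun ω => ?_)
      simp only [Dk]
      ring
    rw [expand, e2, sub_zero, e1]
  -- stationarity
  have hcomp : ∀ (m k : ℤ), P[X (m+1)|F (k+1)] =ᵐ[P] (P[X m|F k]) ∘ T := by
    intro m k
    rw [hF_shift k, hX_shift m]
    exact CovAux.condexp_comp_mp hTmp (hF_le k) (hXi m)
  have hDcomp : ∀ (m k : ℤ), Dk P F (k+1) (X (m+1)) =ᵐ[P] (Dk P F k (X m)) ∘ T := by
    intro m k
    have h1 := hcomp m k
    have h2 := hcomp m (k-1)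
    rw [sub_add_cancel] at h2
    have hk : k + 1 - 1 = k := by ring
    filter_upwards [h1, h2] with ω e1 e2
    simp only [Dk, hk, Function.comp_apply]
    rw [e1, e2]
    rfl
  have step : ∀ (k a b : ℤ),
      ∫ ω, Dk P F (k+1) (X (a+1)) ω * Dk P F (k+1) (X (b+1)) ω ∂P
        = ∫ ω, Dk P F k (X a) ω * Dk P F k (X b) ω ∂P := by
    intro k a b
    have c1 : ∫ ω, Dk P F (k+1) (X (a+1)) ω * Dk P F (k+1) (X (b+1)) ω ∂P
        = ∫ ω, (fun ω' => Dk P F k (X a) ω' * Dk P F k (X b) ω') (T ω) ∂P := by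
      refine integral_congr_ae ?_
      filter_upwards [hDcomp a k, hDcomp b k] with ω e1 e2
      rw [e1, e2]
      rfl
    rw [c1]
    exact CovAux.integral_comp_mp hTmp
      (CovAux.integrable_mul2 (hD2 k a) (hD2 k b)).aestronglyMeasurable
  have iter : ∀ (i : ℕ) (k a b : ℤ),
      ∫ ω, Dk P F k (X a) ω * Dk P F k (X b) ω ∂P
        = ∫ ω, Dk P F (k+i) (X (a+i)) ω * Dk P F (k+i) (X (b+i)) ω ∂P := by
    intro i
    induction i with
    | zero => intro k a b; norm_num
    | succ n ih =>
      intro k a b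
      have hc : ((n+1 : ℕ) : ℤ) = (n:ℤ) + 1 := by push_cast; ring
      rw [hc, ← add_assoc, ← add_assoc, ← add_assoc, ih k a b]
      exact (step (k + n) (a + n) (b + n)).symm
  have stat : ∀ l : ℕ,
      ∫ ω, Dk P F 0 (X l) ω * Dk P F 0 (X (l + j)) ω ∂P
        = ∫ ω, Dk P F (-(l:ℤ)) (X 0) ω * Dk P F (-(l:ℤ)) (X j) ω ∂P := by
    intro l
    have := iter l (-(l:ℤ)) 0 j
    simp only [neg_add_cancel, zero_add] at this
    rw [this, add_comm (j:ℤ) (l:ℤ)]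
  -- telescoping
  have hterm : ∀ l : ℕ, ∫ ω, Dk P F (-(l:ℤ)) (X 0) ω * X (j:ℤ) ω ∂P
      = (∫ ω, (P[X 0|F (-(l:ℤ))]) ω * X (j:ℤ) ω ∂P)
        - ∫ ω, (P[X 0|F (-((l+1:ℕ):ℤ))]) ω * X (j:ℤ) ω ∂P := by
    intro l
    rw [← integral_sub (CovAux.integrable_mul2 (hC2 _ 0) (hX2 j))
      (CovAux.integrable_mul2 (hC2 _ 0) (hX2 j))]
    refine integral_congr_ae (Filter.Eventually.of_forall fun ω => ?_)
    have hcast : -(l:ℤ) - 1 = -((l+1:ℕ):ℤ) := by push_cast; ring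
    simp only [Dk, hcast]
    ring
  -- the L² convergence of the reverse martingale
  have hG_le : ∀ n : ℕ, F (-(n:ℤ)) ≤ ‹MeasurableSpace Ω› := fun n => hF_le _
  have hnorm0 : Tendsto
      (fun n : ℕ => ‖(condExpL2 ℝ ℝ (hG_le n) (hX0_L2.toLp (X 0)) : Lp ℝ 2 P)‖)
      atTop (𝓝 0) := by
    refine CovAux.tendsto_norm_condexpL2_zero (fun n : ℕ => F (-(n:ℤ))) hG_le
      (fun m n hmn => hF_mono (by omega : -(n:ℤ) ≤ -(m:ℤ))) hX0_L2
      ((iInf_le F 0).trans (hF_le 0)) (fun n => iInf_le F _) ?_ hreg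
    intro s hs
    rw [MeasurableSpace.measurableSet_iInf]
    intro i
    exact hF_mono (by omega : (-(((-i).toNat : ℕ) : ℤ)) ≤ i) s (hs (-i).toNat)
  have bridge : ∀ n : ℕ, P[X 0|F (-(n:ℤ))]
      =ᵐ[P] ⇑(condExpL2 ℝ ℝ (hG_le n) (hX0_L2.toLp (X 0)) : Lp ℝ 2 P) := fun n =>
    CovAux.condexp_eq_condexpL2 (hG_le n) hX0_L2
  have hu0 : Tendsto (fun n : ℕ => ∫ ω, (P[X 0|F (-(n:ℤ))]) ω * X (j:ℤ) ω ∂P)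
      atTop (𝓝 0) := by
    have hrep : ∀ n : ℕ, ∫ ω, (P[X 0|F (-(n:ℤ))]) ω * X (j:ℤ) ω ∂P
        = @inner ℝ _ _ ((condExpL2 ℝ ℝ (hG_le n) (hX0_L2.toLp (X 0)) : Lp ℝ 2 P))
          ((hX2 j).toLp (X (j:ℤ))) := by
      intro n
      rw [L2.inner_def]
      refine integral_congr_ae ?_
      filter_upwards [bridge n, (hX2 (j:ℤ)).coeFn_toLp] with ω e1 e2
      rw [e1, e2]
      simp [RCLike.inner_apply, starRingEnd_apply, star_trivial]
      ring
    refine squeeze_zero_norm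
      (a := fun n : ℕ => ‖(condExpL2 ℝ ℝ (hG_le n) (hX0_L2.toLp (X 0)) : Lp ℝ 2 P)‖
        * ‖(hX2 (j:ℤ)).toLp (X (j:ℤ))‖) (fun n => ?_) ?_
    · rw [hrep n, Real.norm_eq_abs]
      exact abs_real_inner_le_norm _ _
    · simpa using hnorm0.mul_const ‖(hX2 (j:ℤ)).toLp (X (j:ℤ))‖
  -- the partial sums
  have h00 : P[X 0|F (-((0:ℕ):ℤ))] = X 0 := by
    have h0 : (-((0:ℕ):ℤ)) = 0 := by norm_num
    rw [h0]
    exact condExp_of_stronglyMeasurable (hF_le 0) hX0_meas.stronglyMeasurable (hXi 0)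
  have heq : ∀ N : ℕ, (∑ l ∈ Finset.range (N+1),
        ∫ ω, Dk P F 0 (X (l:ℤ)) ω * Dk P F 0 (X ((l:ℤ)+(j:ℤ))) ω ∂P)
      = (∫ ω, X 0 ω * X (j:ℤ) ω ∂P)
        - ∫ ω, (P[X 0|F (-((N+1:ℕ):ℤ))]) ω * X (j:ℤ) ω ∂P := by
    intro N
    have h1 : ∀ l ∈ Finset.range (N+1),
        ∫ ω, Dk P F 0 (X (l:ℤ)) ω * Dk P F 0 (X ((l:ℤ)+(j:ℤ))) ω ∂P
        = (fun l : ℕ => ∫ ω, (P[X 0|F (-(l:ℤ))]) ω * X (j:ℤ) ω ∂P) l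
          - (fun l : ℕ => ∫ ω, (P[X 0|F (-(l:ℤ))]) ω * X (j:ℤ) ω ∂P) (l+1) := by
      intro l _
      rw [stat l, orth, hterm l]
    rw [Finset.sum_congr rfl h1,
      Finset.sum_range_sub' (fun l : ℕ => ∫ ω, (P[X 0|F (-(l:ℤ))]) ω * X (j:ℤ) ω ∂P) (N+1)]
    simp only [h00]
  have hS : Tendsto (fun N : ℕ => ∑ l ∈ Finset.range (N+1),
      ∫ ω, Dk P F 0 (X (l:ℤ)) ω * Dk P F 0 (X ((l:ℤ)+(j:ℤ))) ω ∂P)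
      atTop (𝓝 (∫ ω, X 0 ω * X (j:ℤ) ω ∂P)) := by
    have h2 : Tendsto (fun N : ℕ => ∫ ω, (P[X 0|F (-((N+1:ℕ):ℤ))]) ω * X (j:ℤ) ω ∂P)
        atTop (𝓝 0) := by
      exact (hu0.comp (tendsto_add_atTop_nat 1)).congr fun N => rfl
    have h3 := (tendsto_const_nhds (x := ∫ ω, X 0 ω * X (j:ℤ) ω ∂P)).sub h2
    rw [sub_zero] at h3
    refine h3.congr fun N => ?_
    exact (heq N).symm
  -- conclude
  have hfinal := hS.comp (tendsto_sub_atTop_nat j)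
  refine hfinal.congr fun n => ?_
  simp only [Function.comp_apply]
  refine Finset.sum_congr rfl fun l _ => ?_
  have hz01 : (0:ℤ) - 1 = -1 := by norm_num
  simp only [Dk, hz01]
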